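/- For every integer d ≥ 2 and every φ ∈ (0, π/2), the normalized volume of a spherical cap satisfies (1/√(2π(d+1)))·sin^d φ ≤ V(φ) ≤ (1/2)·sin^d φ. -/

import Mathlib

open scoped Real InnerProductSpace
open MeasureTheory Filter

noncomputable section

/-- The `d`-dimensional unit sphere `S^d`, as a subtype of `ℝ^{d+1}`. -/
abbrev Sph (d : ℕ) := Metric.sphere (0 : EuclideanSpace ℝ (Fin (d + 1))) 1

/-- Geodesic distance `ρ(x,y) = arccos⟨x,y⟩` on the sphere. -/
def geoDist {d : ℕ} (x y : Sph d) : ℝ :=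
  Real.arccos ⟪(x : EuclideanSpace ℝ (Fin (d + 1))), (y : EuclideanSpace ℝ (Fin (d + 1)))⟫_ℝ

/-- Spherical cap (geodesic ball) with center `x` and geodesic radius `φ`. -/
def cap {d : ℕ} (x : Sph d) (φ : ℝ) : Set (Sph d) :=
  {y : Sph d | geoDist x y ≤ φ}

/-- Normalized volume of a spherical cap of geodesic radius `φ` on `S^d`,
given by `V(φ) = (∫_0^φ sin^{d-1} t dt) / (2 ∫_0^{π/2} sin^{d-1} t dt)`. -/
def capVolInt (d : ℕ) (φ : ℝ) : ℝ :=
  (∫ t in (0 : ℝ)..φ, Real.sin t ^ (d - 1)) /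
    (2 * ∫ t in (0 : ℝ)..(π / 2), Real.sin t ^ (d - 1))

section Aux

open Real Finset

private lemma half_int (n : ℕ) :
    (∫ t in (0:ℝ)..(π/2), Real.sin t ^ n) = (∫ t in (0:ℝ)..π, Real.sin t ^ n) / 2 := by
  have h1 : (∫ t in (0:ℝ)..(π/2), Real.sin t ^ n) = ∫ t in (π/2)..π, Real.sin t ^ n := by
    have := intervalIntegral.integral_comp_sub_left (a := 0) (b := π/2) (fun x => Real.sin x ^ n) π
    have e1 : π - π/2 = π/2 := by ring
    simp only [Real.sin_pi_sub, e1, sub_zero] at this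
    rw [this]
  have h2 : (∫ t in (0:ℝ)..(π/2), Real.sin t ^ n) + ∫ t in (π/2)..π, Real.sin t ^ n
      = ∫ t in (0:ℝ)..π, Real.sin t ^ n :=
    intervalIntegral.integral_add_adjacent_intervals
      ((continuous_sin.pow n).intervalIntegrable _ _)
      ((continuous_sin.pow n).intervalIntegrable _ _)
  linarith

private lemma telescope (k : ℕ) :
    ∏ i ∈ Finset.range k, ((2*(i:ℝ)+1)/(2*i+3)) = 1/(2*(k:ℝ)+1) := by
  induction k with
  | zero => simp
  | succ k ih =>
    rw [Finset.prod_range_succ, ih]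
    have h1 : (2*(k:ℝ)+1) ≠ 0 := by positivity
    have h3 : (2*(k:ℝ)+3) ≠ 0 := by positivity
    push_cast
    field_simp
    ring

private lemma wallis_sq (n : ℕ) :
    ((n:ℝ)+1)^2 * (∫ t in (0:ℝ)..π, Real.sin t ^ n)^2 ≤ 2*π*((n:ℝ)+2) := by
  rcases Nat.even_or_odd' n with ⟨k, rfl | rfl⟩
  · -- even case n = 2k
    rw [integral_sin_pow_even]
    set P := ∏ i ∈ Finset.range k, (2*(i:ℝ)+1)/(2*i+2) with hP
    have h1 : (2*(k:ℝ)+1) ≠ 0 := by positivity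
    have key : P^2 * Real.Wallis.W k = 1/(2*(k:ℝ)+1) := by
      rw [← telescope k, Real.Wallis.W, ← Finset.prod_pow, ← Finset.prod_mul_distrib]
      apply Finset.prod_congr rfl
      intro i _
      have h1 : (2*(i:ℝ)+1) ≠ 0 := by positivity
      have h2 : (2*(i:ℝ)+2) ≠ 0 := by positivity
      have h3 : (2*(i:ℝ)+3) ≠ 0 := by positivity
      field_simp
    have key' : P^2 * Real.Wallis.W k * (2*(k:ℝ)+1) = 1 := by
      rw [key]; field_simp
    have hW := Real.Wallis.le_W k
    have hWpos := Real.Wallis.W_pos k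
    have e : ((2*(k:ℝ)+1)^2 * (π*P)^2) * Real.Wallis.W k = π^2*(2*(k:ℝ)+1) := by
      linear_combination ((2*(k:ℝ)+1) * π^2) * key'
    have hcast : ((2*k : ℕ):ℝ) = 2*(k:ℝ) := by push_cast; ring
    rw [hcast]
    rw [← mul_le_mul_iff_of_pos_right hWpos, e]
    calc π^2*(2*(k:ℝ)+1) = (2*π*(2*(k:ℝ)+2)) * ((2*(k:ℝ)+1)/(2*(k:ℝ)+2)*(π/2)) := by
          have h2 : (2*(k:ℝ)+2) ≠ 0 := by positivity
          field_simp
      _ ≤ (2*π*(2*(k:ℝ)+2)) * Real.Wallis.W k := by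
          apply mul_le_mul_of_nonneg_left hW (by positivity)
  · -- odd case n = 2k+1
    rw [integral_sin_pow_odd]
    set Q := ∏ i ∈ Finset.range k, (2*(i:ℝ)+2)/(2*i+3) with hQ
    have h1 : (0:ℝ) < 2*(k:ℝ)+1 := by positivity
    have h3 : (0:ℝ) < 2*(k:ℝ)+3 := by positivity
    have key : Q^2 = Real.Wallis.W k * (1/(2*(k:ℝ)+1)) := by
      rw [← telescope k, Real.Wallis.W, ← Finset.prod_pow, ← Finset.prod_mul_distrib]
      apply Finset.prod_congr rfl
      intro i _
      have h1 : (2*(i:ℝ)+1) ≠ 0 := by positivity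
      have h3 : (2*(i:ℝ)+3) ≠ 0 := by positivity
      field_simp
    have key' : Q^2 * (2*(k:ℝ)+1) = Real.Wallis.W k := by
      rw [key]; field_simp
    have hW := Real.Wallis.W_le (k+1)
    rw [Real.Wallis.W_succ] at hW
    have e2 : Real.Wallis.W k * ((2*(k:ℝ)+2)/(2*(k:ℝ)+1)*((2*(k:ℝ)+2)/(2*(k:ℝ)+3)))
        = (Real.Wallis.W k * (2*(k:ℝ)+2)^2)/((2*(k:ℝ)+1)*(2*(k:ℝ)+3)) := by
      rw [eq_div_iff (by positivity : ((2*(k:ℝ)+1)*(2*(k:ℝ)+3)) ≠ 0)]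
      field_simp
    rw [e2, div_le_iff₀ (by positivity)] at hW
    have hcast : ((2*k+1 : ℕ):ℝ) = 2*(k:ℝ)+1 := by push_cast; ring
    rw [hcast]
    nlinarith [key', hW, h1, h3, sq_nonneg Q, mul_pos h1 h3]

private lemma num_lower (n : ℕ) (φ : ℝ) (h0 : 0 ≤ φ) (hφ : φ ≤ π/2) :
    Real.sin φ ^ (n+1) / ((n:ℝ)+1) ≤ ∫ t in (0:ℝ)..φ, Real.sin t ^ n := by
  have h1 : (∫ t in (0:ℝ)..φ, Real.sin t ^ n * Real.cos t) = Real.sin φ ^ (n+1)/((n:ℝ)+1) := by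
    have h := integral_sin_pow_mul_cos_pow_odd (a:=(0:ℝ)) (b:=φ) n 0
    norm_num at h
    exact h
  rw [← h1]
  apply intervalIntegral.integral_mono_on h0
    ((Continuous.intervalIntegrable (by fun_prop)) _ _)
    ((Continuous.intervalIntegrable (by fun_prop)) _ _)
  intro t ht
  have hs : 0 ≤ Real.sin t :=
    Real.sin_nonneg_of_nonneg_of_le_pi ht.1 (by nlinarith [pi_pos, ht.2])
  exact mul_le_of_le_one_right (pow_nonneg hs n) (Real.cos_le_one t)

private lemma num_upper (n : ℕ) (φ : ℝ) (h0 : 0 < φ) (hφ : φ < π/2) :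
    (∫ t in (0:ℝ)..φ, Real.sin t ^ n)
      ≤ Real.sin φ ^ (n+1) * ∫ t in (0:ℝ)..(π/2), Real.sin t ^ n := by
  set N : ℝ → ℝ := fun x => ∫ t in (0:ℝ)..x, Real.sin t ^ n with hNdef
  have hNderiv : ∀ x : ℝ, HasDerivAt N (Real.sin x ^ n) x := by
    intro x
    exact intervalIntegral.integral_hasDerivAt_right
      ((continuous_sin.pow n).intervalIntegrable _ _)
      ((continuous_sin.pow n).stronglyMeasurableAtFilter _ _)
      (continuous_sin.pow n).continuousAt
  have hNcont : Continuous N := by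
    have : Differentiable ℝ N := fun x => (hNderiv x).differentiableAt
    exact this.continuous
  have hNnonneg : ∀ x ∈ Set.Icc (0:ℝ) (π/2), 0 ≤ N x := by
    intro x hx
    apply intervalIntegral.integral_nonneg hx.1
    intro t ht
    exact pow_nonneg (Real.sin_nonneg_of_nonneg_of_le_pi ht.1
      (by nlinarith [pi_pos, ht.2, hx.2])) n
  set K : ℝ → ℝ := fun x => Real.sin x ^ (n+1) - ((n:ℝ)+1) * (Real.cos x * N x) with hKdef
  have hKderiv : ∀ x : ℝ, HasDerivAt K (((n:ℝ)+1) * (Real.sin x * N x)) x := by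
    intro x
    have h1 := (Real.hasDerivAt_sin x).pow (n+1)
    have h2 := ((Real.hasDerivAt_cos x).mul (hNderiv x)).const_mul ((n:ℝ)+1)
    have h3 := h1.sub h2
    refine h3.congr_deriv ?_
    simp only [Nat.add_sub_cancel]
    push_cast
    ring
  have hKcont : Continuous K := by
    have : Differentiable ℝ K := fun x => (hKderiv x).differentiableAt
    exact this.continuous
  have hKmono : MonotoneOn K (Set.Icc (0:ℝ) (π/2)) := by
    apply monotoneOn_of_deriv_nonneg (convex_Icc _ _) hKcont.continuousOn
    · intro x _
      exact (hKderiv x).differentiableAt.differentiableWithinAt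
    · intro x hx
      rw [interior_Icc] at hx
      rw [(hKderiv x).deriv]
      have hsin : 0 ≤ Real.sin x := Real.sin_nonneg_of_nonneg_of_le_pi hx.1.le
        (by nlinarith [pi_pos, hx.2])
      have hN : 0 ≤ N x := hNnonneg x ⟨hx.1.le, hx.2.le⟩
      positivity
  have hK0 : K 0 = 0 := by
    simp [hKdef, hNdef]
  have hKnonneg : ∀ x ∈ Set.Icc (0:ℝ) (π/2), 0 ≤ K x := by
    intro x hx
    rw [← hK0]
    exact hKmono ⟨le_refl 0, by positivity⟩ hx hx.1
  set H : ℝ → ℝ := fun x => N x / Real.sin x ^ (n+1) with hHdef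
  have hsinpos : ∀ x ∈ Set.Icc φ (π/2), 0 < Real.sin x := by
    intro x hx
    exact Real.sin_pos_of_pos_of_lt_pi (lt_of_lt_of_le h0 hx.1)
      (by nlinarith [pi_pos, hx.2])
  have hHmono : MonotoneOn H (Set.Icc φ (π/2)) := by
    apply monotoneOn_of_deriv_nonneg (convex_Icc _ _)
    · exact ContinuousOn.div hNcont.continuousOn (continuous_sin.pow (n+1)).continuousOn
        (fun x hx => pow_ne_zero _ (ne_of_gt (hsinpos x hx)))
    · intro x hx
      rw [interior_Icc] at hx
      have hs : Real.sin x ^ (n+1) ≠ 0 :=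
        pow_ne_zero _ (ne_of_gt (hsinpos x ⟨hx.1.le, hx.2.le⟩))
      exact (((hNderiv x).div ((Real.hasDerivAt_sin x).pow (n+1))
        hs)).differentiableAt.differentiableWithinAt
    · intro x hx
      rw [interior_Icc] at hx
      have hxI : x ∈ Set.Icc φ (π/2) := ⟨hx.1.le, hx.2.le⟩
      have hsp := hsinpos x hxI
      have hs : Real.sin x ^ (n+1) ≠ 0 := pow_ne_zero _ (ne_of_gt hsp)
      have hder := (hNderiv x).div ((Real.hasDerivAt_sin x).pow (n+1)) hs
      rw [show deriv H x = _ from hder.deriv]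
      simp only [Nat.add_sub_cancel, Pi.pow_apply]
      have hnum : Real.sin x ^ n * Real.sin x ^ (n+1) -
          N x * ((((n+1:ℕ)):ℝ) * Real.sin x ^ n * Real.cos x)
          = Real.sin x ^ n * K x := by
        simp only [hKdef]
        push_cast
        ring
      rw [div_nonneg_iff]
      left
      constructor
      · rw [hnum]
        have hKx : 0 ≤ K x := hKnonneg x ⟨le_of_lt (lt_of_lt_of_le h0 hx.1.le), hx.2.le⟩
        have : 0 ≤ Real.sin x ^ n := pow_nonneg hsp.le n
        positivity
      · positivity
  have hmem1 : φ ∈ Set.Icc φ (π/2) := ⟨le_refl _, hφ.le⟩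
  have hmem2 : π/2 ∈ Set.Icc φ (π/2) := ⟨hφ.le, le_refl _⟩
  have := hHmono hmem1 hmem2 hφ.le
  simp only [hHdef] at this
  rw [Real.sin_pi_div_two, one_pow, div_one] at this
  have hsφ : 0 < Real.sin φ ^ (n+1) := pow_pos (hsinpos φ hmem1) _
  rw [div_le_iff₀ hsφ] at this
  calc N φ ≤ N (π/2) * Real.sin φ ^ (n+1) := this
    _ = Real.sin φ ^ (n+1) * N (π/2) := by ring

end Aux

/-- For every `d ≥ 2` and `φ ∈ (0, π/2)`,
`(1/√(2π(d+1)))·sin^d φ ≤ V(φ) ≤ (1/2)·sin^d φ`. -/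
theorem capVolInt_bounds (d : ℕ) (hd : 2 ≤ d) (φ : ℝ)
    (hφ : φ ∈ Set.Ioo (0 : ℝ) (π / 2)) :
    1 / Real.sqrt (2 * π * (d + 1)) * Real.sin φ ^ d ≤ capVolInt d φ ∧
    capVolInt d φ ≤ 1 / 2 * Real.sin φ ^ d := by
  obtain ⟨hφ0, hφ2⟩ := hφ
  set n := d - 1 with hn
  have hdn : d = n + 1 := by omega
  have hSpos : 0 < ∫ t in (0:ℝ)..π, Real.sin t ^ n := integral_sin_pow_pos n
  set W := ∫ t in (0:ℝ)..(π/2), Real.sin t ^ n with hWdef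
  have hWeq : W = (∫ t in (0:ℝ)..π, Real.sin t ^ n) / 2 := half_int n
  have hWpos : 0 < W := by rw [hWeq]; linarith
  have hl := num_lower n φ hφ0.le hφ2.le
  have hu := num_upper n φ hφ0 hφ2
  have hspos : 0 < Real.sin φ := Real.sin_pos_of_pos_of_lt_pi hφ0 (by nlinarith [Real.pi_pos])
  have hpowd : Real.sin φ ^ d = Real.sin φ ^ (n+1) := by rw [hdn]
  have hcastd : ((d:ℝ) + 1) = (n:ℝ) + 2 := by rw [hdn]; push_cast; ring
  rw [capVolInt, ← hWdef]
  constructor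
  · -- lower bound
    have hkey : 2*((n:ℝ)+1)*W ≤ Real.sqrt (2*π*((n:ℝ)+2)) := by
      rw [hWeq]
      rw [show 2*((n:ℝ)+1)*((∫ t in (0:ℝ)..π, Real.sin t ^ n)/2)
          = ((n:ℝ)+1)*(∫ t in (0:ℝ)..π, Real.sin t ^ n) by ring]
      apply Real.le_sqrt' (by positivity) |>.mpr
      calc (((n:ℝ)+1)*(∫ t in (0:ℝ)..π, Real.sin t ^ n))^2
          = ((n:ℝ)+1)^2 * (∫ t in (0:ℝ)..π, Real.sin t ^ n)^2 := by ring
        _ ≤ 2*π*((n:ℝ)+2) := wallis_sq n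
    have hsqpos : 0 < Real.sqrt (2*π*((n:ℝ)+2)) :=
      lt_of_lt_of_le (by positivity) hkey
    have h1 : 1 / Real.sqrt (2*π*((n:ℝ)+2)) ≤ 1 / (2*((n:ℝ)+1)*W) :=
      one_div_le_one_div_of_le (by positivity) hkey
    rw [hcastd, hpowd]
    calc 1 / Real.sqrt (2*π*((n:ℝ)+2)) * Real.sin φ ^ (n+1)
        ≤ 1 / (2*((n:ℝ)+1)*W) * Real.sin φ ^ (n+1) := by
          apply mul_le_mul_of_nonneg_right h1 (by positivity)
      _ = (Real.sin φ ^ (n+1) / ((n:ℝ)+1)) / (2*W) := by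
          field_simp
      _ ≤ (∫ t in (0:ℝ)..φ, Real.sin t ^ n) / (2*W) := by
          gcongr
  · -- upper bound
    rw [hpowd]
    calc (∫ t in (0:ℝ)..φ, Real.sin t ^ n) / (2*W)
        ≤ (Real.sin φ ^ (n+1) * W) / (2*W) := by gcongr
      _ = 1/2 * Real.sin φ ^ (n+1) := by
          field_simp

end
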